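/- Let B = (B_t)_{t∈ℕ} be any adapted real-valued process with B_0 = G(1). Define M and S recursively by M_0 = S_0 = 1, M_t := M_{t−1} + (B_t − B_{t−1})/G′(S_{t−1}), and S_t := max(S_{t−1}, M_t). Then S_t = max_{s ≤ t} M_s for all t, and pathwise for every t ≥ 1: B_t − B_{t−1} = (M_t − M_{t−1})·G′(S_{t−1}) and max_{s ≤ t} B_s − B_t = (S_t − M_t)·G′(S_t). The pair (M, S) is the almost surely unique pair of processes with M_0 = S_0 = 1 such that S is the running maximum of M and the first difference equation holds for all t ≥ 1. Moreover, if B is a supermartingale (respectively a martingale) and each M_t is integrable, then M is a supermartingale (respectively a martingale). -/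

import Mathlib

open MeasureTheory Filter Set

/-- The running maximum `S t = max_{s ≤ t} M s`. -/
noncomputable def runMax {Ω : Type*} (M : ℕ → Ω → ℝ) (t : ℕ) (ω : Ω) : ℝ :=
  (Finset.range (t + 1)).sup' (Finset.nonempty_range_iff.mpr (Nat.succ_ne_zero t))
    (fun s => M s ω)

/-- The pair `(M_t, S_t)` defined recursively from `B`:
`M_0 = S_0 = 1`, `M_t = M_{t−1} + (B_t − B_{t−1})/G′(S_{t−1})`, `S_t = max(S_{t−1}, M_t)`. -/
noncomputable def msRec {Ω : Type*} (G' : ℝ → ℝ) (B : ℕ → Ω → ℝ) (ω : Ω) : ℕ → ℝ × ℝ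
  | 0 => (1, 1)
  | t + 1 =>
    let p := msRec G' B ω t
    let m := p.1 + (B (t + 1) ω - B t ω) / G' p.2
    (m, max p.2 m)

/-- The variation process `M` of the martingale-max decomposition. -/
noncomputable def Mvar {Ω : Type*} (G' : ℝ → ℝ) (B : ℕ → Ω → ℝ) (t : ℕ) (ω : Ω) : ℝ :=
  (msRec G' B ω t).1

/-- The running-maximum process `S` of the martingale-max decomposition. -/
noncomputable def Svar {Ω : Type*} (G' : ℝ → ℝ) (B : ℕ → Ω → ℝ) (t : ℕ) (ω : Ω) : ℝ :=
  (msRec G' B ω t).2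

section aux
variable {Ω : Type*} (G' : ℝ → ℝ) (B : ℕ → Ω → ℝ)

lemma runMax_zero (M : ℕ → Ω → ℝ) (ω : Ω) : runMax M 0 ω = M 0 ω := by
  simp [runMax]

lemma runMax_succ (M : ℕ → Ω → ℝ) (t : ℕ) (ω : Ω) :
    runMax M (t + 1) ω = max (M (t + 1) ω) (runMax M t ω) := by
  simp [runMax, Finset.range_add_one, Finset.sup'_insert]

lemma Mvar_zero (ω : Ω) : Mvar G' B 0 ω = 1 := rfl
lemma Svar_zero (ω : Ω) : Svar G' B 0 ω = 1 := rfl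

lemma Mvar_succ (t : ℕ) (ω : Ω) :
    Mvar G' B (t + 1) ω = Mvar G' B t ω + (B (t + 1) ω - B t ω) / G' (Svar G' B t ω) := rfl

lemma Svar_succ (t : ℕ) (ω : Ω) :
    Svar G' B (t + 1) ω = max (Svar G' B t ω) (Mvar G' B (t + 1) ω) := rfl

lemma one_le_Svar (t : ℕ) (ω : Ω) : 1 ≤ Svar G' B t ω := by
  induction t with
  | zero => exact le_refl 1
  | succ t ih => exact le_trans ih (le_max_left _ _)

lemma measurable_comp_pos {α : Type*} {mα : MeasurableSpace α} {g : ℝ → ℝ}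
    (hc : ContinuousOn g (Set.Ioi 0)) {S : α → ℝ} (hS : Measurable S)
    (hpos : ∀ a, 0 < S a) : Measurable fun a => g (S a) := by
  have h1 : Measurable fun a => (⟨S a, hpos a⟩ : Set.Ioi (0:ℝ)) := hS.subtype_mk
  exact (continuousOn_iff_continuous_restrict.mp hc).measurable.comp h1

end aux

/-- Martingale-max decomposition: any process `B` started at `G(1)` decomposes uniquely into
a variation process `M` and its running maximum `S` satisfying the difference equations. -/
theorem stmt18 {Ω : Type*} {m0 : MeasurableSpace Ω} {P : Measure Ω} [IsProbabilityMeasure P]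
    (ℱ : Filtration ℕ m0)
    (G G' : ℝ → ℝ)
    (hG0 : ∀ x ∈ Set.Ioi (0 : ℝ), 0 ≤ G x)
    (hGconc : ConcaveOn ℝ (Set.Ioi 0) G)
    (hGstrict : StrictMonoOn G (Set.Ioi 0))
    (hG' : ∀ x ∈ Set.Ioi (0 : ℝ), HasDerivAt G (G' x) x)
    (hG'cont : ContinuousOn G' (Set.Ioi 0))
    (hG'pos : ∀ x ∈ Set.Ioi (0 : ℝ), 0 < G' x)
    (B : ℕ → Ω → ℝ) (hadapt : Adapted ℱ B)
    (hB0 : ∀ ω, B 0 ω = G 1) :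
    (∀ t ω, Svar G' B t ω = runMax (Mvar G' B) t ω)
    ∧ (∀ t ω, B (t + 1) ω - B t ω
        = (Mvar G' B (t + 1) ω - Mvar G' B t ω) * G' (Svar G' B t ω))
    ∧ (∀ t ω, runMax B t ω - B t ω
        = (Svar G' B t ω - Mvar G' B t ω) * G' (Svar G' B t ω))
    ∧ (∀ M' S' : ℕ → Ω → ℝ,
        (∀ᵐ ω ∂P, M' 0 ω = 1 ∧ S' 0 ω = 1 ∧ (∀ t, S' t ω = runMax M' t ω) ∧
          ∀ t, B (t + 1) ω - B t ω = (M' (t + 1) ω - M' t ω) * G' (S' t ω)) →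
        ∀ᵐ ω ∂P, ∀ t, M' t ω = Mvar G' B t ω ∧ S' t ω = Svar G' B t ω)
    ∧ (Supermartingale B ℱ P → (∀ t, Integrable (Mvar G' B t) P) →
        Supermartingale (Mvar G' B) ℱ P)
    ∧ (Martingale B ℱ P → (∀ t, Integrable (Mvar G' B t) P) →
        Martingale (Mvar G' B) ℱ P) := by
  have hSpos : ∀ t (ω : Ω), (0:ℝ) < Svar G' B t ω := fun t ω =>
    lt_of_lt_of_le one_pos (one_le_Svar G' B t ω)
  have hgpos : ∀ t (ω : Ω), 0 < G' (Svar G' B t ω) := fun t ω =>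
    hG'pos _ (hSpos t ω)
  -- Part 2
  have part2 : ∀ t (ω : Ω), B (t + 1) ω - B t ω
      = (Mvar G' B (t + 1) ω - Mvar G' B t ω) * G' (Svar G' B t ω) := by
    intro t ω
    rw [Mvar_succ, add_sub_cancel_left, div_mul_cancel₀ _ (hgpos t ω).ne']
  -- Part 1
  have part1 : ∀ t (ω : Ω), Svar G' B t ω = runMax (Mvar G' B) t ω := by
    intro t ω
    induction t with
    | zero => rw [runMax_zero, Mvar_zero, Svar_zero]
    | succ t ih => rw [runMax_succ, Svar_succ, ih, max_comm]
  -- Part 3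
  have part3 : ∀ t (ω : Ω), runMax B t ω - B t ω
      = (Svar G' B t ω - Mvar G' B t ω) * G' (Svar G' B t ω) := by
    intro t ω
    induction t with
    | zero => rw [runMax_zero, Svar_zero, Mvar_zero, sub_self, sub_self, zero_mul]
    | succ t ih =>
      have key : runMax B t ω - B (t + 1) ω
          = (Svar G' B t ω - Mvar G' B (t + 1) ω) * G' (Svar G' B t ω) := by
        have := part2 t ω
        nlinarith [ih, part2 t ω]
      rw [runMax_succ, Svar_succ]
      rcases le_total (Mvar G' B (t + 1) ω) (Svar G' B t ω) with h | h
      · rw [max_eq_left h]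
        have h1 : B (t + 1) ω ≤ runMax B t ω := by
          nlinarith [key, mul_nonneg (sub_nonneg.mpr h) (hgpos t ω).le]
        rw [max_eq_right h1]
        exact key
      · rw [max_eq_right h]
        have h1 : runMax B t ω ≤ B (t + 1) ω := by
          nlinarith [key, mul_nonpos_of_nonpos_of_nonneg (sub_nonpos.mpr h) (hgpos t ω).le]
        rw [max_eq_left h1, sub_self, sub_self, zero_mul]
  -- Part 4 : uniqueness
  have part4 : ∀ M' S' : ℕ → Ω → ℝ,
      (∀ᵐ ω ∂P, M' 0 ω = 1 ∧ S' 0 ω = 1 ∧ (∀ t, S' t ω = runMax M' t ω) ∧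
        ∀ t, B (t + 1) ω - B t ω = (M' (t + 1) ω - M' t ω) * G' (S' t ω)) →
      ∀ᵐ ω ∂P, ∀ t, M' t ω = Mvar G' B t ω ∧ S' t ω = Svar G' B t ω := by
    intro M' S' h
    filter_upwards [h] with ω hω
    obtain ⟨h0M, h0S, hrun, hdiff⟩ := hω
    intro t
    induction t with
    | zero => exact ⟨h0M, h0S⟩
    | succ t ih =>
      obtain ⟨hM, hS⟩ := ih
      have hMsucc : M' (t + 1) ω = Mvar G' B (t + 1) ω := by
        have h1 := (hdiff t).symm.trans (part2 t ω)
        rw [hM, hS] at h1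
        have h2 := mul_right_cancel₀ (hgpos t ω).ne' h1
        linarith
      refine ⟨hMsucc, ?_⟩
      rw [hrun (t + 1), runMax_succ, ← hrun t, hMsucc, hS, Svar_succ, max_comm]
  -- Measurability / adaptedness
  have hmeas : ∀ t, Measurable[ℱ t] (Mvar G' B t) ∧ Measurable[ℱ t] (Svar G' B t) := by
    intro t
    induction t with
    | zero => exact ⟨measurable_const, measurable_const⟩
    | succ t ih =>
      obtain ⟨hM, hS⟩ := ih
      have hBt : Measurable[ℱ t] (B t) := hadapt t
      have hBt1 : Measurable[ℱ (t + 1)] (B (t + 1)) := hadapt (t + 1)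
      have hg : Measurable[ℱ t] fun ω => G' (Svar G' B t ω) :=
        measurable_comp_pos hG'cont hS (hSpos t)
      have hMsucc : Measurable[ℱ (t + 1)] (Mvar G' B (t + 1)) := by
        have : Mvar G' B (t + 1)
            = fun ω => Mvar G' B t ω + (B (t + 1) ω - B t ω) / G' (Svar G' B t ω) := rfl
        rw [this]
        exact ((hM.mono (ℱ.mono (Nat.le_succ t)) le_rfl).add
          (((hBt1.sub (hBt.mono (ℱ.mono (Nat.le_succ t)) le_rfl))).div
            (hg.mono (ℱ.mono (Nat.le_succ t)) le_rfl)))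
      refine ⟨hMsucc, ?_⟩
      have : Svar G' B (t + 1) = fun ω => max (Svar G' B t ω) (Mvar G' B (t + 1) ω) := rfl
      rw [this]
      exact (hS.mono (ℱ.mono (Nat.le_succ t)) le_rfl).max hMsucc
  have hadaptM : Adapted ℱ (Mvar G' B) := fun t => (hmeas t).1
  -- conditional expectation computation, common to both parts
  have hcond : ∀ (hBint : ∀ t, Integrable (B t) P) (hMint : ∀ t, Integrable (Mvar G' B t) P)
      (t : ℕ), (P[Mvar G' B (t + 1)|ℱ t]) =ᵐ[P]
        Mvar G' B t + (fun ω => (G' (Svar G' B t ω))⁻¹) * (P[B (t + 1) - B t|ℱ t]) := by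
    intro hBint hMint t
    set c : Ω → ℝ := fun ω => (G' (Svar G' B t ω))⁻¹ with hc
    set X : Ω → ℝ := fun ω => B (t + 1) ω - B t ω with hX
    have hXeq : (B (t + 1) - B t) = X := rfl
    have hkey : Mvar G' B (t + 1) = Mvar G' B t + c * X := by
      funext ω
      simp only [Pi.add_apply, Pi.mul_apply, Mvar_succ, hc, hX, div_eq_inv_mul]
    have hcmeas : StronglyMeasurable[ℱ t] c :=
      ((measurable_comp_pos hG'cont (hmeas t).2 (hSpos t)).inv).stronglyMeasurable
    have hXint : Integrable X P := (hBint (t + 1)).sub (hBint t)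
    have hcXint : Integrable (c * X) P := by
      have : c * X = Mvar G' B (t + 1) - Mvar G' B t := by
        rw [hkey]; ring
      rw [this]
      exact (hMint (t + 1)).sub (hMint t)
    rw [hkey, hXeq]
    calc (P[Mvar G' B t + c * X|ℱ t])
        =ᵐ[P] (P[Mvar G' B t|ℱ t]) + (P[c * X|ℱ t]) :=
          condExp_add (hMint t) hcXint _
      _ =ᵐ[P] Mvar G' B t + c * (P[X|ℱ t]) := by
          refine EventuallyEq.add ?_ ?_
          · exact EventuallyEq.of_eq (condExp_of_stronglyMeasurable (ℱ.le t) ((hmeas t).1.stronglyMeasurable)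
              (hMint t))
          · exact condExp_mul_of_stronglyMeasurable_left hcmeas hcXint hXint
  refine ⟨fun t ω => part1 t ω, part2, part3, part4, ?_, ?_⟩
  · -- supermartingale
    intro hB hMint
    have hBint : ∀ t, Integrable (B t) P := fun t => hB.2.2 t
    refine supermartingale_nat hadaptM.stronglyAdapted hMint fun t => ?_
    have h1 := hcond hBint hMint t
    have h2 : (P[B (t + 1) - B t|ℱ t]) =ᵐ[P] (P[B (t + 1)|ℱ t]) - B t := by
      calc (P[B (t + 1) - B t|ℱ t]) =ᵐ[P] (P[B (t + 1)|ℱ t]) - (P[B t|ℱ t]) :=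
            condExp_sub (hBint (t + 1)) (hBint t) _
        _ =ᵐ[P] (P[B (t + 1)|ℱ t]) - B t := by
            exact EventuallyEq.sub (EventuallyEq.refl _ _)
              (EventuallyEq.of_eq (condExp_of_stronglyMeasurable (ℱ.le t) (hadapt t).stronglyMeasurable (hBint t)))
    have h3 : (P[B (t + 1)|ℱ t]) ≤ᵐ[P] B t := hB.2.1 t (t + 1) (Nat.le_succ t)
    filter_upwards [h1, h2, h3] with ω hω1 hω2 hω3
    rw [hω1]
    simp only [Pi.add_apply, Pi.mul_apply]
    have : (P[B (t + 1) - B t|ℱ t]) ω ≤ 0 := by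
      rw [hω2]; simp only [Pi.sub_apply]; linarith
    nlinarith [inv_nonneg.mpr (hgpos t ω).le]
  · -- martingale
    intro hB hMint
    have hBint : ∀ t, Integrable (B t) P := fun t => hB.integrable t
    refine martingale_nat hadaptM.stronglyAdapted hMint fun t => ?_
    have h1 := hcond hBint hMint t
    have h2 : (P[B (t + 1) - B t|ℱ t]) =ᵐ[P] 0 := by
      calc (P[B (t + 1) - B t|ℱ t]) =ᵐ[P] (P[B (t + 1)|ℱ t]) - (P[B t|ℱ t]) :=
            condExp_sub (hBint (t + 1)) (hBint t) _
        _ =ᵐ[P] B t - B t := by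
            exact EventuallyEq.sub (hB.2 t (t + 1) (Nat.le_succ t))
              (EventuallyEq.of_eq (condExp_of_stronglyMeasurable (ℱ.le t) (hadapt t).stronglyMeasurable (hBint t)))
        _ = 0 := by funext ω; simp
    filter_upwards [h1, h2] with ω hω1 hω2
    rw [hω1]
    simp only [Pi.add_apply, Pi.mul_apply, hω2, Pi.zero_apply, mul_zero, add_zero]
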